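/- Let a, b, c be positive integers and let Γ be the Z-grading of K[x,y,z] with deg x = a, deg y = b, deg z = −c. If φ is a Γ-graded automorphism of K[x,y,z], then φ(z) = λz for some nonzero λ ∈ K. -/

import Mathlib

open MvPolynomial

/-- For the `ℤ`-grading of `K[x,y,z]` with weights `w`, an automorphism is *graded*
if it maps each homogeneous component into itself. -/
def IsGraded {K : Type*} [CommRing K] (w : Fin 3 → ℤ)
    (φ : MvPolynomial (Fin 3) K ≃ₐ[K] MvPolynomial (Fin 3) K) : Prop :=
  ∀ (d : ℤ) (f : MvPolynomial (Fin 3) K),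
    f.IsWeightedHomogeneous w d → (φ f).IsWeightedHomogeneous w d

/-- A unit in a multivariate polynomial ring over a field is a nonzero constant. -/
lemma isUnit_eq_C {K : Type*} [Field K] :
    ∀ (n : ℕ) (g : MvPolynomial (Fin n) K), IsUnit g → ∃ l : K, g = C l := by
  intro n
  induction n with
  | zero =>
    intro g _
    exact ⟨g.coeff 0, g.eq_C_of_isEmpty⟩
  | succ n ih =>
    intro g hg
    set e := finSuccEquiv K n with he
    have hu : IsUnit (e g) := hg.map e
    have hdeg : (e g).degree = 0 := Polynomial.degree_eq_zero_of_isUnit hu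
    have heg : e g = Polynomial.C ((e g).coeff 0) := Polynomial.eq_C_of_degree_eq_zero hdeg
    have hu0 : IsUnit ((e g).coeff 0) := by
      rw [heg, Polynomial.isUnit_C] at hu
      exact hu
    obtain ⟨l, hl⟩ := ih _ hu0
    refine ⟨l, ?_⟩
    have h2 : e.symm (Polynomial.C (C l)) = (C l : MvPolynomial (Fin (n + 1)) K) := by
      simpa using congrArg (fun f => f l)
        (MvPolynomial.finSuccEquiv_comp_C_eq_C (R := K) (n := n))
    have : e g = e (C l) := by
      rw [heg, hl, ← h2, AlgEquiv.apply_symm_apply]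
    exact e.injective this

lemma prime_X2 {K : Type*} [Field K] : Prime (X 2 : MvPolynomial (Fin 3) K) := by
  rw [← MulEquiv.prime_iff (renameEquiv K (Equiv.swap (0 : Fin 3) 2)).toMulEquiv]
  show Prime ((renameEquiv K (Equiv.swap (0 : Fin 3) 2)) (X 2))
  rw [renameEquiv_apply, rename_X, Equiv.swap_apply_right]
  rw [← MulEquiv.prime_iff (finSuccEquiv K 2).toMulEquiv]
  show Prime ((finSuccEquiv K 2) (X 0))
  rw [finSuccEquiv_X_zero]
  exact Polynomial.prime_X

/-- For the `ℤ`-grading of `K[x,y,z]` with `deg x = a > 0`, `deg y = b > 0`,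
`deg z = -c < 0`, every graded automorphism satisfies `φ(z) = λ z` for some `λ ≠ 0`.
Here `x = X 0`, `y = X 1`, `z = X 2`. -/
theorem graded_automorphism_scales_z
    {K : Type*} [Field K] [IsAlgClosed K] [CharZero K]
    (a b c : ℕ) (ha : 0 < a) (hb : 0 < b) (hc : 0 < c)
    (φ : MvPolynomial (Fin 3) K ≃ₐ[K] MvPolynomial (Fin 3) K)
    (hφ : IsGraded ![(a : ℤ), (b : ℤ), -(c : ℤ)] φ) :
    ∃ l : K, l ≠ 0 ∧ φ (X 2) = C l * X 2 := by
  set w : Fin 3 → ℤ := ![(a : ℤ), (b : ℤ), -(c : ℤ)] with hw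
  have hw2 : w 2 = -(c : ℤ) := rfl
  have hz : (φ (X 2)).IsWeightedHomogeneous w (-(c : ℤ)) := by
    apply hφ
    have := isWeightedHomogeneous_X (R := K) w (2 : Fin 3)
    rwa [hw2] at this
  -- X 2 divides φ (X 2)
  have hdvd : (X 2 : MvPolynomial (Fin 3) K) ∣ φ (X 2) := by
    conv_rhs => rw [(φ (X 2)).as_sum]
    apply Finset.dvd_sum
    intro m hm
    rw [X_dvd_monomial]
    right
    intro h0
    have hmw := hz (mem_support_iff.mp hm)
    rw [Finsupp.weight_apply, Finsupp.sum_fintype _ _ (fun i => by simp)] at hmw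
    rw [Fin.sum_univ_three] at hmw
    simp only [hw, Matrix.cons_val_zero, Matrix.cons_val_one, Matrix.head_cons,
      Matrix.cons_val_two, Matrix.tail_cons, smul_eq_mul, nsmul_eq_mul, h0, Nat.cast_zero, zero_mul, zero_smul] at hmw
    have h1 : (0 : ℤ) ≤ (m 0 : ℤ) * a + (m 1 : ℤ) * b := by positivity
    have h2 : (0 : ℤ) < (c : ℤ) := by exact_mod_cast hc
    linarith [hmw]
  obtain ⟨g, hg⟩ := hdvd
  have hprime : Prime (X 2 : MvPolynomial (Fin 3) K) := prime_X2
  have hprime' : Prime (φ (X 2)) :=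
    (MulEquiv.prime_iff φ.toMulEquiv (p := (X 2 : MvPolynomial (Fin 3) K))).mpr hprime
  have hirr : Irreducible (φ (X 2)) := hprime'.irreducible
  have hgunit : IsUnit g := by
    rcases hirr.isUnit_or_isUnit hg with h | h
    · exact absurd h hprime.not_unit
    · exact h
  obtain ⟨l, hl⟩ := isUnit_eq_C 3 g hgunit
  have hl0 : l ≠ 0 := by
    rintro rfl
    rw [hl, map_zero, mul_zero] at hg
    exact hprime'.ne_zero hg
  exact ⟨l, hl0, by rw [hg, hl, mul_comm]⟩
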